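/- arXiv:0806.3060 — 3 statements merged into one kernel-verified Lean document; each statement's English description precedes it below -/
import Mathlib

section
/- Define block lengths ℓ_1 = 1 and ℓ_i = i · ∑_{k=1}^{i-1} ℓ_k for i ≥ 2, and let a : ℕ → ℝ be the 0–1 sequence whose i-th consecutive block has length ℓ_i and constant value 0 if i is odd, 1 if i is even. Then its Birkhoff averages B_n satisfy liminf B_n = 0 and limsup B_n = 1, and for every k ≥ 0 the Hölder means satisfy liminf_n H^{(k)}_n = 0 and limsup_n H^{(k)}_n = 1 (type B2). -/
open Filter Topology

/-- Birkhoff averages: `birk a n = (1/n) * ∑_{i=0}^{n-1} a i` (junk value `0` at `n = 0`). -/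
noncomputable def birk (a : ℕ → ℝ) (n : ℕ) : ℝ := (∑ i ∈ Finset.range n, a i) / n

/-- Iterated Hölder means of a sequence `b` (indexed from 1):
`holderMeans b 0 n = b n` and `holderMeans b (k+1) n = (1/n) * ∑_{i=1}^n holderMeans b k i`. -/
noncomputable def holderMeans (b : ℕ → ℝ) : ℕ → ℕ → ℝ
  | 0, n => b n
  | k+1, n => (∑ i ∈ Finset.Icc 1 n, holderMeans b k i) / n

namespace ExampleTwoAux

/-- `H` is `≤ ε` on arbitrarily late intervals `[m, N]` with `m ≤ ε N`. -/
def IsSmallIO (H : ℕ → ℝ) : Prop :=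
  ∀ ε : ℝ, 0 < ε → ∀ M : ℕ, ∃ m N : ℕ, M ≤ m ∧ 1 ≤ m ∧ (m : ℝ) ≤ ε * N ∧
    ∀ n : ℕ, m ≤ n → n ≤ N → H n ≤ ε

lemma isSmallIO_congr {f g : ℕ → ℝ} (h : ∀ n, 1 ≤ n → f n = g n) (hf : IsSmallIO f) :
    IsSmallIO g := by
  intro ε hε M
  obtain ⟨m, N, h1, h2, h3, h4⟩ := hf ε hε M
  exact ⟨m, N, h1, h2, h3, fun n hmn hnN => (h n (le_trans h2 hmn)) ▸ h4 n hmn hnN⟩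

lemma avg_le_one {H : ℕ → ℝ} (hH1 : ∀ n, H n ≤ 1) (n : ℕ) :
    (∑ i ∈ Finset.Icc 1 n, H i) / n ≤ 1 := by
  rcases Nat.eq_zero_or_pos n with rfl | hn
  · simp
  · rw [div_le_one (by positivity)]
    calc ∑ i ∈ Finset.Icc 1 n, H i ≤ (Finset.Icc 1 n).card • (1 : ℝ) :=
          Finset.sum_le_card_nsmul _ _ _ (fun i _ => hH1 i)
      _ = n := by simp [Nat.card_Icc]

lemma isSmallIO_step {H : ℕ → ℝ} (hH1 : ∀ n, H n ≤ 1) (hs : IsSmallIO H) :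
    IsSmallIO (fun n => (∑ i ∈ Finset.Icc 1 n, H i) / n) := by
  intro ε hε M
  by_cases hε1 : 1 ≤ ε
  · refine ⟨max M 1, max M 1, le_max_left _ _, le_max_right _ _, ?_, fun n _ _ => ?_⟩
    · have h1 : (1 : ℝ) ≤ (max M 1 : ℕ) := by exact_mod_cast le_max_right M 1
      nlinarith
    · exact le_trans (avg_le_one hH1 n) hε1
  push_neg at hε1
  set c : ℕ := ⌈(2 : ℝ) / ε⌉₊ with hc
  have hc2 : (2 : ℝ) / ε ≤ c := Nat.le_ceil _
  have hcpos : (0 : ℝ) < c := lt_of_lt_of_le (by positivity) hc2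
  have hc1 : 1 ≤ c := by exact_mod_cast Nat.one_le_iff_ne_zero.mpr (by
    intro h; rw [h] at hcpos; simp at hcpos)
  have hc3 : (c : ℝ) ≤ 3 / ε := by
    have h1 : (c : ℝ) < 2 / ε + 1 := Nat.ceil_lt_add_one (by positivity)
    have h2 : (1 : ℝ) ≤ 1 / ε := one_le_one_div hε hε1.le
    have : (2 : ℝ) / ε + 1 / ε = 3 / ε := by ring
    linarith
  set ε' : ℝ := ε ^ 2 / 3 with hε'def
  have hε' : 0 < ε' := by positivity
  obtain ⟨m, N, hm, hm1, hmN, hHsm⟩ := hs ε' hε' (max M 1)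
  have hcε' : (c : ℝ) * ε' ≤ ε := by
    have : (c : ℝ) * ε' ≤ (3 / ε) * ε' := by
      apply mul_le_mul_of_nonneg_right hc3 hε'.le
    have h2 : (3 / ε) * ε' = ε := by rw [hε'def]; field_simp
    linarith
  refine ⟨c * m, N, ?_, ?_, ?_, ?_⟩
  · calc M ≤ max M 1 := le_max_left _ _
      _ ≤ m := hm
      _ ≤ c * m := Nat.le_mul_of_pos_left m hc1
  · exact le_trans hm1 (Nat.le_mul_of_pos_left m hc1)
  · push_cast
    calc (c : ℝ) * m ≤ c * (ε' * N) := by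
          apply mul_le_mul_of_nonneg_left (by exact_mod_cast hmN) hcpos.le
      _ = (c * ε') * N := by ring
      _ ≤ ε * N := mul_le_mul_of_nonneg_right hcε' (by positivity)
  · intro n hcmn hnN
    have hmn : m ≤ n := le_trans (Nat.le_mul_of_pos_left m hc1) hcmn
    have hn1 : 1 ≤ n := le_trans hm1 hmn
    have hnpos : (0 : ℝ) < n := by exact_mod_cast hn1
    -- split the sum
    have h01 : Finset.Icc 1 n = Finset.Ioc 0 n := by
      ext x; simp only [Finset.mem_Icc, Finset.mem_Ioc]; omega
    have hsplit : ∑ i ∈ Finset.Icc 1 n, H i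
        = ∑ i ∈ Finset.Ioc 0 (m - 1), H i + ∑ i ∈ Finset.Ioc (m - 1) n, H i := by
      rw [h01, ← Finset.sum_Ioc_consecutive _ (Nat.zero_le (m - 1)) (by omega : m - 1 ≤ n)]
    have hsum1 : ∑ i ∈ Finset.Ioc 0 (m - 1), H i ≤ (m : ℝ) := by
      calc ∑ i ∈ Finset.Ioc 0 (m - 1), H i ≤ (Finset.Ioc 0 (m - 1)).card • (1 : ℝ) :=
            Finset.sum_le_card_nsmul _ _ _ (fun i _ => hH1 i)
        _ = ((m - 1 : ℕ) : ℝ) := by simp [Nat.card_Ioc]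
        _ ≤ m := by exact_mod_cast Nat.sub_le m 1
    have hsum2 : ∑ i ∈ Finset.Ioc (m - 1) n, H i ≤ (n : ℝ) * ε' := by
      calc ∑ i ∈ Finset.Ioc (m - 1) n, H i ≤ (Finset.Ioc (m - 1) n).card • ε' := by
            apply Finset.sum_le_card_nsmul
            intro i hi
            rw [Finset.mem_Ioc] at hi
            exact hHsm i (by omega) (le_trans hi.2 hnN)
        _ = ((n - (m - 1) : ℕ) : ℝ) * ε' := by simp [Nat.card_Ioc]
        _ ≤ (n : ℝ) * ε' := by
            apply mul_le_mul_of_nonneg_right _ hε'.le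
            exact_mod_cast Nat.sub_le n (m - 1)
    have hsum : ∑ i ∈ Finset.Icc 1 n, H i ≤ (m : ℝ) + n * ε' := by
      rw [hsplit]; linarith
    have hdiv : (∑ i ∈ Finset.Icc 1 n, H i) / n ≤ (m : ℝ) / n + ε' := by
      calc (∑ i ∈ Finset.Icc 1 n, H i) / n ≤ ((m : ℝ) + n * ε') / n := by gcongr
        _ = (m : ℝ) / n + ε' := by field_simp
    have hmn' : (m : ℝ) / n ≤ 1 / c := by
      have hmpos : (0 : ℝ) < m := by exact_mod_cast hm1
      have h1 : (m : ℝ) / n ≤ (m : ℝ) / (c * m) := by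
        apply div_le_div_of_nonneg_left hmpos.le (by positivity)
        exact_mod_cast hcmn
      have h2 : (m : ℝ) / (c * m) = 1 / c := by field_simp
      linarith
    have h1c : (1 : ℝ) / c ≤ ε / 2 := by
      have := one_div_le_one_div_of_le (by positivity : (0:ℝ) < 2 / ε) hc2
      have h2 : (1 : ℝ) / (2 / ε) = ε / 2 := by field_simp
      linarith
    have hε'2 : ε' ≤ ε / 2 := by rw [hε'def]; nlinarith
    calc (∑ i ∈ Finset.Icc 1 n, H i) / n ≤ (m : ℝ) / n + ε' := hdiv
      _ ≤ ε / 2 + ε / 2 := by linarith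
      _ = ε := by ring

lemma liminf_eq_zero {H : ℕ → ℝ} (h0 : ∀ n, 0 ≤ H n) (h1 : ∀ n, H n ≤ 1)
    (hs : IsSmallIO H) : liminf H atTop = 0 := by
  have hbdd : IsBoundedUnder (· ≥ ·) atTop H := isBoundedUnder_of ⟨0, fun n => h0 n⟩
  have hbdd' : IsBoundedUnder (· ≤ ·) atTop H := isBoundedUnder_of ⟨1, fun n => h1 n⟩
  apply le_antisymm
  · apply le_of_forall_pos_le_add
    intro ε hε
    have hfreq : ∃ᶠ n in atTop, H n ≤ ε := by
      rw [frequently_atTop]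
      intro M
      obtain ⟨m, N, hMm, hm1, hmN, hsm⟩ := hs (min ε 1) (by positivity) M
      have hmN' : m ≤ N := by
        have h1 : (m : ℝ) ≤ min ε 1 * N := hmN
        have h2 : min ε 1 * (N : ℝ) ≤ N := by
          nlinarith [min_le_right ε 1, (Nat.cast_nonneg N : (0:ℝ) ≤ N), lt_min hε one_pos]
        exact_mod_cast le_trans h1 h2
      exact ⟨m, hMm, le_trans (hsm m le_rfl hmN') (min_le_left _ _)⟩
    have := liminf_le_of_frequently_le hfreq hbdd
    linarith
  · exact le_liminf_of_le hbdd'.isCoboundedUnder_ge (Eventually.of_forall h0)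

lemma limsup_eq_one {H : ℕ → ℝ} (h0 : ∀ n, 0 ≤ H n) (h1 : ∀ n, H n ≤ 1)
    (hs : IsSmallIO (fun n => 1 - H n)) : limsup H atTop = 1 := by
  have hbdd : IsBoundedUnder (· ≥ ·) atTop H := isBoundedUnder_of ⟨0, fun n => h0 n⟩
  have hbdd' : IsBoundedUnder (· ≤ ·) atTop H := isBoundedUnder_of ⟨1, fun n => h1 n⟩
  apply le_antisymm
  · exact limsup_le_of_le hbdd.isCoboundedUnder_le (Eventually.of_forall h1)
  · apply le_of_forall_pos_le_add
    intro ε hε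
    have hfreq : ∃ᶠ n in atTop, 1 - ε ≤ H n := by
      rw [frequently_atTop]
      intro M
      obtain ⟨m, N, hMm, hm1, hmN, hsm⟩ := hs (min ε 1) (by positivity) M
      have hmN' : m ≤ N := by
        have h1 : (m : ℝ) ≤ min ε 1 * N := hmN
        have h2 : min ε 1 * (N : ℝ) ≤ N := by
          nlinarith [min_le_right ε 1, (Nat.cast_nonneg N : (0:ℝ) ≤ N), lt_min hε one_pos]
        exact_mod_cast le_trans h1 h2
      refine ⟨m, hMm, ?_⟩
      have := hsm m le_rfl hmN'
      have h3 : min ε 1 ≤ ε := min_le_left _ _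
      simp only at this
      linarith
    have := le_limsup_of_frequently_le hfreq hbdd'
    linarith

end ExampleTwoAux

open ExampleTwoAux

/-- **Example 2.**  Define block lengths `ℓ 1 = 1` and `ℓ i = i * ∑_{k=1}^{i-1} ℓ k`
for `i ≥ 2`, and let `a` be the 0–1 sequence whose `i`-th consecutive block (of
length `ℓ i`, occupying positions `∑_{k<i} ℓ k ≤ n < ∑_{k≤i} ℓ k`) has constant
value `0` for `i` odd and `1` for `i` even.  Then `liminf B = 0`, `limsup B = 1`,
and all Hölder means have `liminf = 0` and `limsup = 1` (type B2). -/
theorem exampleTwo_type_B2 (ℓ : ℕ → ℕ) (hℓ1 : ℓ 1 = 1)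
    (hℓ : ∀ i : ℕ, 2 ≤ i → ℓ i = i * ∑ k ∈ Finset.Icc 1 (i - 1), ℓ k)
    (a : ℕ → ℝ)
    (ha : ∀ i : ℕ, 1 ≤ i → ∀ n : ℕ,
      (∑ k ∈ Finset.Icc 1 (i - 1), ℓ k) ≤ n → n < ∑ k ∈ Finset.Icc 1 i, ℓ k →
      a n = if i % 2 = 0 then 1 else 0) :
    liminf (birk a) atTop = 0 ∧ limsup (birk a) atTop = 1 ∧
    ∀ k : ℕ, liminf (fun n : ℕ => holderMeans (birk a) k n) atTop = 0 ∧
      limsup (fun n : ℕ => holderMeans (birk a) k n) atTop = 1 := by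
  classical
  set S : ℕ → ℕ := fun i => ∑ k ∈ Finset.Icc 1 i, ℓ k with hSdef
  have hℓ' : ∀ i : ℕ, 2 ≤ i → ℓ i = i * S (i - 1) := hℓ
  have ha' : ∀ i : ℕ, 1 ≤ i → ∀ n : ℕ, S (i - 1) ≤ n → n < S i →
      a n = if i % 2 = 0 then 1 else 0 := ha
  have hS0 : S 0 = 0 := by simp [hSdef]
  have hSsucc : ∀ i, S (i + 1) = S i + ℓ (i + 1) := fun i =>
    Finset.sum_Icc_succ_top (by omega) ℓ
  have hS1 : S 1 = 1 := by simp [hSdef, hℓ1]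
  clear_value S
  clear hSdef
  have hSrec : ∀ i, 2 ≤ i → S i = (i + 1) * S (i - 1) := by
    intro i hi
    obtain ⟨j, rfl⟩ : ∃ j, i = j + 2 := ⟨i - 2, by omega⟩
    have h1 : S (j + 2) = S (j + 1) + ℓ (j + 2) := hSsucc (j + 1)
    have h2 : ℓ (j + 2) = (j + 2) * S (j + 1) := hℓ' (j + 2) (by omega)
    have h3 : j + 2 - 1 = j + 1 := rfl
    rw [h3, h1, h2]; ring
  have hSpos : ∀ i, 1 ≤ i → 1 ≤ S i := by
    intro i hi
    induction i with
    | zero => omega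
    | succ j ih =>
      rw [hSsucc j]
      rcases Nat.eq_zero_or_pos j with rfl | hj
      · simp [hS0, hℓ1]
      · have := ih hj; omega
  have hSge : ∀ i, 1 ≤ i → i ≤ S i := by
    intro i hi
    induction i with
    | zero => omega
    | succ j ih =>
      rcases Nat.eq_zero_or_pos j with rfl | hj
      · simp [hS1]
      · have h1 : S (j + 1) = (j + 2) * S j := by
          have := hSrec (j + 1) (by omega)
          simpa using this
        have h2 : 1 ≤ S j := hSpos j hj
        have : j + 2 ≤ (j + 2) * S j := Nat.le_mul_of_pos_right _ h2
        omega
  have hcover : ∀ n, ∃ i, 1 ≤ i ∧ S (i - 1) ≤ n ∧ n < S i := by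
    intro n
    have hex : ∃ i, n < S i := ⟨n + 1, by have := hSge (n + 1) (by omega); omega⟩
    have hi : n < S (Nat.find hex) := Nat.find_spec hex
    have hi1 : 1 ≤ Nat.find hex := by
      rcases Nat.eq_zero_or_pos (Nat.find hex) with h | h
      · rw [h] at hi; omega
      · exact h
    have hprev : ¬ n < S (Nat.find hex - 1) := Nat.find_min hex (by omega)
    exact ⟨Nat.find hex, hi1, by omega, hi⟩
  have hab : ∀ n, 0 ≤ a n ∧ a n ≤ 1 := by
    intro n
    obtain ⟨i, hi1, h1, h2⟩ := hcover n
    rw [ha' i hi1 n h1 h2]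
    split <;> norm_num
  have hbound0 : ∀ n, 0 ≤ birk a n := fun n =>
    div_nonneg (Finset.sum_nonneg fun i _ => (hab i).1) (Nat.cast_nonneg n)
  have hbound1 : ∀ n, birk a n ≤ 1 := by
    intro n
    rcases Nat.eq_zero_or_pos n with rfl | hn
    · simp [birk]
    · rw [birk, div_le_one (by exact_mod_cast hn)]
      calc ∑ i ∈ Finset.range n, a i ≤ (Finset.range n).card • (1 : ℝ) :=
            Finset.sum_le_card_nsmul _ _ _ (fun i _ => (hab i).2)
        _ = n := by simp
  -- sum bounds over blocks
  have hodd : ∀ i, 1 ≤ i → i % 2 = 1 → ∀ n, n ≤ S i →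
      (∑ j ∈ Finset.range n, a j) ≤ (S (i - 1) : ℝ) := by
    intro i hi hiodd n hn
    by_cases hcase : n ≤ S (i - 1)
    · calc ∑ j ∈ Finset.range n, a j ≤ (Finset.range n).card • (1 : ℝ) :=
            Finset.sum_le_card_nsmul _ _ _ (fun j _ => (hab j).2)
        _ = (n : ℝ) := by simp
        _ ≤ (S (i - 1) : ℝ) := by exact_mod_cast hcase
    · push_neg at hcase
      rw [Finset.range_eq_Ico,
        ← Finset.sum_Ico_consecutive a (Nat.zero_le (S (i - 1))) hcase.le]
      have hz : ∑ j ∈ Finset.Ico (S (i - 1)) n, a j = 0 := by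
        apply Finset.sum_eq_zero
        intro j hj
        rw [Finset.mem_Ico] at hj
        rw [ha' i hi j hj.1 (lt_of_lt_of_le hj.2 hn)]
        simp [hiodd]
      rw [hz, add_zero]
      calc ∑ j ∈ Finset.Ico 0 (S (i - 1)), a j ≤ (Finset.Ico 0 (S (i - 1))).card • (1 : ℝ) :=
            Finset.sum_le_card_nsmul _ _ _ (fun j _ => (hab j).2)
        _ = (S (i - 1) : ℝ) := by simp
  have heven : ∀ i, 1 ≤ i → i % 2 = 0 → ∀ n, S (i - 1) ≤ n → n ≤ S i →
      ((n : ℝ) - S (i - 1)) ≤ ∑ j ∈ Finset.range n, a j := by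
    intro i hi hieven n h1 h2
    rw [Finset.range_eq_Ico, ← Finset.sum_Ico_consecutive a (Nat.zero_le (S (i - 1))) h1]
    have hz : ∑ j ∈ Finset.Ico (S (i - 1)) n, a j = ((n - S (i - 1) : ℕ) : ℝ) := by
      have hone : ∀ j ∈ Finset.Ico (S (i - 1)) n, a j = 1 := by
        intro j hj
        rw [Finset.mem_Ico] at hj
        rw [ha' i hi j hj.1 (lt_of_lt_of_le hj.2 h2)]
        simp [hieven]
      rw [Finset.sum_congr rfl hone, Finset.sum_const, Nat.card_Ico, nsmul_eq_mul, mul_one]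
    have hnn : 0 ≤ ∑ j ∈ Finset.Ico 0 (S (i - 1)), a j :=
      Finset.sum_nonneg fun j _ => (hab j).1
    have : ((n - S (i - 1) : ℕ) : ℝ) = (n : ℝ) - S (i - 1) := by
      push_cast [Nat.cast_sub h1]; ring
    rw [hz, this]
    linarith
  -- the two base-case IsSmallIO facts
  have hsmall0 : IsSmallIO (birk a) := by
    intro ε hε M
    set c : ℕ := max 1 ⌈1 / ε⌉₊ with hcdef
    have hc1 : 1 ≤ c := le_max_left 1 _
    have hcε : 1 / ε ≤ (c : ℝ) :=
      le_trans (Nat.le_ceil _) (by exact_mod_cast le_max_right 1 _)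
    have hcpos : (0 : ℝ) < c := by exact_mod_cast hc1
    have h1c : (1 : ℝ) / c ≤ ε := by
      have h := one_div_le_one_div_of_le (by positivity) hcε
      rwa [one_div_one_div] at h
    clear_value c
    clear hcdef
    set i : ℕ := 2 * (max (M + 1) (max 2 ⌈(c : ℝ) / ε⌉₊)) + 1 with hidef
    have hi2 : 2 ≤ i := by omega
    have hiodd' : i % 2 = 1 := by omega
    have hiM : M + 1 ≤ i - 1 := by omega
    have hceil : ⌈(c : ℝ) / ε⌉₊ ≤ i + 1 := by omega
    clear_value i
    clear hidef
    have hiε : (c : ℝ) ≤ ε * (i + 1) := by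
      have h := Nat.le_ceil ((c : ℝ) / ε)
      have h2 : (⌈(c : ℝ) / ε⌉₊ : ℝ) ≤ ((i : ℕ) + 1 : ℝ) := by
        exact_mod_cast hceil
      have h3 : (c : ℝ) / ε ≤ (i : ℝ) + 1 := by linarith
      rw [div_le_iff₀ hε] at h3
      nlinarith
    have hSi1 : 1 ≤ S (i - 1) := hSpos _ (by omega)
    have hgei : i - 1 ≤ S (i - 1) := hSge _ (by omega)
    have hSN : S i = (i + 1) * S (i - 1) := hSrec i hi2
    refine ⟨c * S (i - 1), S i, ?_, ?_, ?_, ?_⟩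
    · calc M ≤ i - 1 := by omega
        _ ≤ S (i - 1) := hgei
        _ ≤ c * S (i - 1) := Nat.le_mul_of_pos_left _ hc1
    · exact le_trans hSi1 (Nat.le_mul_of_pos_left _ hc1)
    · rw [hSN]
      push_cast
      have hS0' : (0 : ℝ) ≤ (S (i - 1) : ℝ) := Nat.cast_nonneg _
      nlinarith [mul_le_mul_of_nonneg_right hiε hS0']
    · intro n hmn hnN
      have hn1 : 1 ≤ n := le_trans (le_trans hSi1 (Nat.le_mul_of_pos_left _ hc1)) hmn
      have hnpos : (0 : ℝ) < n := by exact_mod_cast hn1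
      have hsum := hodd i (by omega) hiodd' n hnN
      have hSpos' : (0 : ℝ) < (S (i - 1) : ℝ) := by exact_mod_cast hSi1
      calc birk a n = (∑ j ∈ Finset.range n, a j) / n := rfl
        _ ≤ (S (i - 1) : ℝ) / n := by gcongr
        _ ≤ (S (i - 1) : ℝ) / ((c : ℝ) * S (i - 1)) := by
            apply div_le_div_of_nonneg_left hSpos'.le (by positivity)
            exact_mod_cast hmn
        _ = 1 / (c : ℝ) := by
            rw [mul_comm, ← div_div, div_self hSpos'.ne']
        _ ≤ ε := h1c
  have hsmall1 : IsSmallIO (fun n => 1 - birk a n) := by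
    intro ε hε M
    set c : ℕ := max 1 ⌈1 / ε⌉₊ with hcdef
    have hc1 : 1 ≤ c := le_max_left 1 _
    have hcε : 1 / ε ≤ (c : ℝ) :=
      le_trans (Nat.le_ceil _) (by exact_mod_cast le_max_right 1 _)
    have hcpos : (0 : ℝ) < c := by exact_mod_cast hc1
    have h1c : (1 : ℝ) / c ≤ ε := by
      have h := one_div_le_one_div_of_le (by positivity) hcε
      rwa [one_div_one_div] at h
    clear_value c
    clear hcdef
    set i : ℕ := 2 * (max (M + 1) (max 2 ⌈(c : ℝ) / ε⌉₊)) with hidef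
    have hi2 : 2 ≤ i := by omega
    have hieven : i % 2 = 0 := by omega
    have hiM : M + 1 ≤ i - 1 := by omega
    have hceil : ⌈(c : ℝ) / ε⌉₊ ≤ i + 1 := by omega
    clear_value i
    clear hidef
    have hiε : (c : ℝ) ≤ ε * (i + 1) := by
      have h := Nat.le_ceil ((c : ℝ) / ε)
      have h2 : (⌈(c : ℝ) / ε⌉₊ : ℝ) ≤ ((i : ℕ) + 1 : ℝ) := by
        exact_mod_cast hceil
      have h3 : (c : ℝ) / ε ≤ (i : ℝ) + 1 := by linarith
      rw [div_le_iff₀ hε] at h3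
      nlinarith
    have hSi1 : 1 ≤ S (i - 1) := hSpos _ (by omega)
    have hgei : i - 1 ≤ S (i - 1) := hSge _ (by omega)
    have hSN : S i = (i + 1) * S (i - 1) := hSrec i hi2
    refine ⟨c * S (i - 1), S i, ?_, ?_, ?_, ?_⟩
    · calc M ≤ i - 1 := by omega
        _ ≤ S (i - 1) := hgei
        _ ≤ c * S (i - 1) := Nat.le_mul_of_pos_left _ hc1
    · exact le_trans hSi1 (Nat.le_mul_of_pos_left _ hc1)
    · rw [hSN]
      push_cast
      have hS0' : (0 : ℝ) ≤ (S (i - 1) : ℝ) := Nat.cast_nonneg _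
      nlinarith [mul_le_mul_of_nonneg_right hiε hS0']
    · intro n hmn hnN
      have hn1 : 1 ≤ n := le_trans (le_trans hSi1 (Nat.le_mul_of_pos_left _ hc1)) hmn
      have hnpos : (0 : ℝ) < n := by exact_mod_cast hn1
      have hSn : S (i - 1) ≤ n := le_trans (Nat.le_mul_of_pos_left _ hc1) hmn
      have hsum := heven i (by omega) hieven n hSn hnN
      have hSpos' : (0 : ℝ) < (S (i - 1) : ℝ) := by exact_mod_cast hSi1
      have h5 : ((n : ℝ) - S (i - 1)) / n ≤ (∑ j ∈ Finset.range n, a j) / n := by gcongr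
      have h6 : ((n : ℝ) - S (i - 1)) / n = 1 - (S (i - 1) : ℝ) / n := by
        field_simp
      have h7 : (S (i - 1) : ℝ) / n ≤ (S (i - 1) : ℝ) / ((c : ℝ) * S (i - 1)) := by
        apply div_le_div_of_nonneg_left hSpos'.le (by positivity)
        exact_mod_cast hmn
      have h8 : (S (i - 1) : ℝ) / ((c : ℝ) * S (i - 1)) = 1 / (c : ℝ) := by
        rw [mul_comm, ← div_div, div_self hSpos'.ne']
      have hbk : birk a n = (∑ j ∈ Finset.range n, a j) / n := rfl
      simp only
      rw [hbk]
      linarith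
  -- the inductive package
  have key : ∀ k, (∀ n, 0 ≤ holderMeans (birk a) k n) ∧
      (∀ n, holderMeans (birk a) k n ≤ 1) ∧
      IsSmallIO (holderMeans (birk a) k) ∧
      IsSmallIO (fun n => 1 - holderMeans (birk a) k n) := by
    intro k
    induction k with
    | zero => exact ⟨hbound0, hbound1, hsmall0, hsmall1⟩
    | succ k ih =>
      obtain ⟨ih0, ih1, ihs, ihs'⟩ := ih
      have e : ∀ n, holderMeans (birk a) (k + 1) n
          = (∑ i ∈ Finset.Icc 1 n, holderMeans (birk a) k i) / n := fun n => rfl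
      refine ⟨?_, ?_, ?_, ?_⟩
      · intro n
        rw [e]
        exact div_nonneg (Finset.sum_nonneg fun i _ => ih0 i) (Nat.cast_nonneg n)
      · intro n
        rw [e]
        exact avg_le_one ih1 n
      · exact isSmallIO_congr (fun n _ => rfl) (isSmallIO_step ih1 ihs)
      · have h2 : ∀ n, (1 : ℝ) - holderMeans (birk a) k n ≤ 1 := fun n => by
          linarith [ih0 n]
        apply isSmallIO_congr ?_ (isSmallIO_step h2 ihs')
        intro n hn
        have hnpos : (0 : ℝ) < n := by exact_mod_cast hn
        have hcard : ((Finset.Icc 1 n).card : ℝ) = n := by simp [Nat.card_Icc]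
        show (∑ i ∈ Finset.Icc 1 n, (1 - holderMeans (birk a) k i)) / n
            = 1 - holderMeans (birk a) (k + 1) n
        rw [e, Finset.sum_sub_distrib, Finset.sum_const, sub_div, nsmul_eq_mul, hcard,
          mul_one, div_self hnpos.ne']
  refine ⟨?_, ?_, fun k => ⟨?_, ?_⟩⟩
  · exact liminf_eq_zero hbound0 hbound1 hsmall0
  · exact limsup_eq_one hbound0 hbound1 hsmall1
  · exact liminf_eq_zero (key k).1 (key k).2.1 (key k).2.2.1
  · exact limsup_eq_one (key k).1 (key k).2.1 (key k).2.2.2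
end

section
/- Let a : ℕ → ℝ be the (unbounded) sequence defined in consecutive blocks, where the n-th block (n ≥ 1) occupies positions n(n−1)/2, …, n(n+1)/2 − 1 and the entry at offset r (0 ≤ r < n) within that block equals (−1)^{n+1} (n − r). Then the Birkhoff averages B_m = (1/m) ∑_{i=0}^{m-1} a_i do not converge — in fact at m = n(n+1)/2 one has B_m = (n+1)/(2n) for n odd and B_m = −(n+2)/(2(n+1)) for n even, so limsup B_m = 1/2 and liminf B_m = −1/2 — while the first-order Hölder means H^{(1)}_m = (1/m) ∑_{i=1}^{m} B_i do converge. -/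
open Filter Topology

open Finset

/-- The hypothesis of Example 3. -/
def Ex3Hyp (a : ℕ → ℝ) : Prop :=
  ∀ n : ℕ, 1 ≤ n → ∀ r : ℕ, r < n →
    a (n * (n - 1) / 2 + r) = (-1 : ℝ) ^ (n + 1) * ((n : ℝ) - (r : ℝ))

/-- Triangular numbers. -/
def ex3T (n : ℕ) : ℕ := n * (n + 1) / 2

lemma ex3T_two (n : ℕ) : 2 * ex3T n = n * (n + 1) := by
  obtain ⟨k, hk⟩ := Nat.even_mul_succ_self n
  have h : n * (n + 1) = 2 * k := by omega
  simp only [ex3T, h]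
  omega

lemma ex3T_succ (n : ℕ) : ex3T (n + 1) = ex3T n + (n + 1) := by
  have h1 := ex3T_two n
  have h2 := ex3T_two (n + 1)
  have h3 : (n+1) * ((n+1) + 1) = n * (n+1) + 2 * (n+1) := by ring
  omega

lemma ex3T_cast (n : ℕ) : (ex3T n : ℝ) = (n : ℝ) * ((n : ℝ) + 1) / 2 := by
  have h := ex3T_two n
  have : ((2 * ex3T n : ℕ) : ℝ) = ((n * (n + 1) : ℕ) : ℝ) := by rw [h]
  push_cast at this
  linarith

lemma ex3T_mono : Monotone ex3T := by
  apply monotone_nat_of_le_succ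
  intro n; rw [ex3T_succ]; omega

lemma ex3T_ge (n : ℕ) : n ≤ ex3T n := by
  have := ex3T_two n
  have : 2 * n ≤ 2 * ex3T n := by nlinarith
  omega

/-- The value of the partial sums at triangular numbers. -/
noncomputable def ex3s (n : ℕ) : ℝ :=
  if Even n then -((n : ℝ) * ((n : ℝ) + 2)) / 4 else ((n : ℝ) + 1) ^ 2 / 4

lemma ex3s_succ (n : ℕ) :
    ex3s (n + 1) = ex3s n + (-1 : ℝ) ^ n * (((n:ℝ)+1) * (((2*(n:ℝ)+3)) - ((n:ℝ)+1))) / 2 := by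
  rcases Nat.even_or_odd n with h | h
  · rw [ex3s, ex3s, if_pos h, if_neg (by simp [Nat.even_add_one, h]), h.neg_one_pow]
    push_cast; ring
  · rw [ex3s, ex3s, if_pos (Nat.even_add_one.2 (Nat.not_even_iff_odd.2 h)),
      if_neg (Nat.not_even_iff_odd.2 h), h.neg_one_pow]
    push_cast; ring

/-- Key formula: partial sums inside block `n+1`. -/
lemma ex3_mid {a : ℕ → ℝ} (ha : Ex3Hyp a) :
    ∀ n r, r ≤ n + 1 → (∑ i ∈ range (ex3T n + r), a i) =
      ex3s n + (-1 : ℝ) ^ n * ((r : ℝ) * ((2*(n:ℝ)+3) - (r:ℝ))) / 2 := by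
  intro n
  induction n with
  | zero =>
    intro r hr
    interval_cases r
    · simp [ex3T, ex3s]
    · have h0 := ha 1 le_rfl 0 (by omega)
      simp only [ex3T]
      norm_num at h0 ⊢
      rw [h0, ex3s]
      norm_num
  | succ n ih =>
    have base : (∑ i ∈ range (ex3T (n+1)), a i) = ex3s (n + 1) := by
      have h1 := ih (n + 1) le_rfl
      rw [← ex3T_succ] at h1
      rw [h1, ex3s_succ]
      push_cast; ring
    intro r
    induction r with
    | zero =>
      intro _
      simpa using base
    | succ r ihr =>
      intro hr
      have hidx : ex3T (n+1) + (r + 1) = (ex3T (n+1) + r) + 1 := by omega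
      rw [hidx, Finset.sum_range_succ, ihr (by omega)]
      have haval := ha (n + 2) (by omega) r (by omega)
      have hidx2 : (n + 2) * ((n + 2) - 1) / 2 + r = ex3T (n+1) + r := by
        have : (n + 2) * ((n + 2) - 1) = (n+1) * ((n+1) + 1) := by
          simp [Nat.add_sub_cancel]; ring
        simp only [ex3T, this]
      rw [hidx2] at haval
      rw [haval]
      have hp : (-1 : ℝ) ^ (n + 2 + 1) = (-1 : ℝ) ^ (n+1) := by
        rw [pow_succ, pow_succ, pow_succ]; ring
      rw [hp]
      push_cast; ring

/-- Bound on partial sums within blocks. -/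
lemma ex3_absS {a : ℕ → ℝ} (ha : Ex3Hyp a) (n r : ℕ) (hr : r ≤ n + 1) :
    |∑ i ∈ range (ex3T n + r), a i| ≤ ((n : ℝ) + 2) ^ 2 / 4 := by
  rw [ex3_mid ha n r hr]
  have hr0 : (0 : ℝ) ≤ (r : ℝ) := by positivity
  have hr1 : (r : ℝ) ≤ (n : ℝ) + 1 := by exact_mod_cast hr
  have hn0 : (0 : ℝ) ≤ (n : ℝ) := by positivity
  have hg0 : (0 : ℝ) ≤ (r : ℝ) * ((2*(n:ℝ)+3) - (r:ℝ)) := by nlinarith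
  have hg1 : (r : ℝ) * ((2*(n:ℝ)+3) - (r:ℝ)) ≤ ((n:ℝ)+1) * ((n:ℝ)+2) := by nlinarith
  rcases Nat.even_or_odd n with h | h
  · rw [h.neg_one_pow, ex3s, if_pos h, abs_le]
    constructor <;> nlinarith
  · rw [h.neg_one_pow, ex3s, if_neg (Nat.not_even_iff_odd.2 h), abs_le]
    constructor <;> nlinarith

/-- Every natural number lies in some block. -/
lemma ex3_rep : ∀ m : ℕ, ∃ n r, r ≤ n + 1 ∧ m = ex3T n + r := by
  intro m
  induction m with
  | zero => exact ⟨0, 0, by omega, by simp [ex3T]⟩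
  | succ m ih =>
    obtain ⟨n, r, hr, hm⟩ := ih
    rcases Nat.lt_or_ge r (n + 1) with h | h
    · exact ⟨n, r + 1, by omega, by omega⟩
    · have hr' : r = n + 1 := by omega
      refine ⟨n + 1, 1, by omega, ?_⟩
      rw [ex3T_succ]; omega

lemma ex3_birk_le {a : ℕ → ℝ} (ha : Ex3Hyp a) (n r : ℕ) (hn : 1 ≤ n) (hr : r ≤ n + 1) :
    |birk a (ex3T n + r)| ≤ ((n : ℝ) + 2) ^ 2 / (2 * (n : ℝ) * ((n : ℝ) + 1)) := by
  have hn0 : (1 : ℝ) ≤ (n : ℝ) := by exact_mod_cast hn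
  have hT : ((ex3T n + r : ℕ) : ℝ) ≥ (n : ℝ) * ((n : ℝ) + 1) / 2 := by
    push_cast
    have := ex3T_cast n
    have : (0:ℝ) ≤ (r:ℝ) := by positivity
    linarith [ex3T_cast n]
  have hpos : (0 : ℝ) < (n : ℝ) * ((n : ℝ) + 1) / 2 := by nlinarith
  have hmpos : (0 : ℝ) < ((ex3T n + r : ℕ) : ℝ) := lt_of_lt_of_le hpos hT
  rw [birk, abs_div, abs_of_pos hmpos]
  calc |∑ i ∈ range (ex3T n + r), a i| / ((ex3T n + r : ℕ) : ℝ)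
      ≤ (((n : ℝ) + 2) ^ 2 / 4) / ((n : ℝ) * ((n : ℝ) + 1) / 2) := by
        apply div_le_div₀ (by positivity) (ex3_absS ha n r hr) hpos hT
    _ = ((n : ℝ) + 2) ^ 2 / (2 * (n : ℝ) * ((n : ℝ) + 1)) := by
        field_simp; ring

lemma ex3_birk_abs3 {a : ℕ → ℝ} (ha : Ex3Hyp a) (m : ℕ) : |birk a m| ≤ 3 := by
  obtain ⟨n, r, hr, rfl⟩ := ex3_rep m
  rcases Nat.eq_zero_or_pos n with rfl | hn
  · interval_cases r
    · simp [birk, ex3T]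
    · have h0 := ha 1 le_rfl 0 (by omega)
      norm_num at h0
      have : ex3T 0 + 1 = 1 := by simp [ex3T]
      rw [this, birk]
      simp [h0]
  · have h := ex3_birk_le ha n r hn hr
    have hn0 : (1 : ℝ) ≤ (n : ℝ) := by exact_mod_cast hn
    have : ((n : ℝ) + 2) ^ 2 / (2 * (n : ℝ) * ((n : ℝ) + 1)) ≤ 3 := by
      rw [div_le_iff₀ (by nlinarith)]
      nlinarith
    linarith

lemma ex3_birk_up {a : ℕ → ℝ} (ha : Ex3Hyp a) (n r : ℕ) (hn : 1 ≤ n) (hr : r ≤ n + 1) :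
    |birk a (ex3T n + r)| ≤ 1 / 2 + 4 / (n : ℝ) := by
  have h := ex3_birk_le ha n r hn hr
  have hn0 : (1 : ℝ) ≤ (n : ℝ) := by exact_mod_cast hn
  have : ((n : ℝ) + 2) ^ 2 / (2 * (n : ℝ) * ((n : ℝ) + 1)) ≤ 1 / 2 + 4 / (n : ℝ) := by
    rw [div_add_div _ _ (by norm_num) (by linarith), div_le_div_iff₀ (by nlinarith) (by nlinarith)]
    nlinarith
  linarith

lemma ex3_birkT {a : ℕ → ℝ} (ha : Ex3Hyp a) (n : ℕ) :
    birk a (ex3T n) = ex3s n / (ex3T n : ℝ) := by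
  rw [birk]
  congr 1
  have := ex3_mid ha n 0 (by omega)
  simpa using this

lemma ex3_birkT_odd {a : ℕ → ℝ} (ha : Ex3Hyp a) (n : ℕ) (hn : 1 ≤ n) (ho : Odd n) :
    birk a (ex3T n) = ((n : ℝ) + 1) / (2 * (n : ℝ)) := by
  rw [ex3_birkT ha, ex3s, if_neg (Nat.not_even_iff_odd.2 ho), ex3T_cast]
  have hn0 : (1 : ℝ) ≤ (n : ℝ) := by exact_mod_cast hn
  rw [div_eq_div_iff (by nlinarith) (by nlinarith)]
  ring

lemma ex3_birkT_even {a : ℕ → ℝ} (ha : Ex3Hyp a) (n : ℕ) (hn : 1 ≤ n) (he : Even n) :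
    birk a (ex3T n) = -(((n : ℝ) + 2) / (2 * ((n : ℝ) + 1))) := by
  rw [ex3_birkT ha, ex3s, if_pos he, ex3T_cast]
  have hn0 : (1 : ℝ) ≤ (n : ℝ) := by exact_mod_cast hn
  have h1 : (n : ℝ) ≠ 0 := by linarith
  have h2 : (n : ℝ) + 1 ≠ 0 := by linarith
  field_simp
  ring

lemma ex3_block_of_ge {m N : ℕ} (hN : 1 ≤ N) (hm : ex3T (N + 1) ≤ m) :
    ∃ n r, N ≤ n ∧ r ≤ n + 1 ∧ m = ex3T n + r := by
  obtain ⟨n, r, hr, rfl⟩ := ex3_rep m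
  refine ⟨n, r, ?_, hr, rfl⟩
  by_contra h
  push_neg at h
  have h1 : ex3T n + r ≤ ex3T (n + 1) := by rw [ex3T_succ]; omega
  have h2 : ex3T (n + 1) ≤ ex3T N := ex3T_mono (by omega)
  have h3 : ex3T N < ex3T (N + 1) := by rw [ex3T_succ]; omega
  omega

lemma ex3_ev_bound {a : ℕ → ℝ} (ha : Ex3Hyp a) (N : ℕ) (hN : 1 ≤ N) :
    ∀ m, ex3T (N + 1) ≤ m → |birk a m| ≤ 1 / 2 + 4 / (N : ℝ) := by
  intro m hm
  obtain ⟨n, r, hn, hr, rfl⟩ := ex3_block_of_ge hN hm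
  have h := ex3_birk_up ha n r (by omega) hr
  have hN0 : (1 : ℝ) ≤ (N : ℝ) := by exact_mod_cast hN
  have hnN : (N : ℝ) ≤ (n : ℝ) := by exact_mod_cast hn
  have : 4 / (n : ℝ) ≤ 4 / (N : ℝ) :=
    div_le_div_of_nonneg_left (by norm_num) (by linarith) hnN
  linarith

lemma ex3_bddAbove {a : ℕ → ℝ} (ha : Ex3Hyp a) :
    IsBoundedUnder (· ≤ ·) atTop (birk a) :=
  isBoundedUnder_of ⟨3, fun m => (abs_le.1 (ex3_birk_abs3 ha m)).2⟩

lemma ex3_bddBelow {a : ℕ → ℝ} (ha : Ex3Hyp a) :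
    IsBoundedUnder (· ≥ ·) atTop (birk a) :=
  isBoundedUnder_of ⟨-3, fun m => (abs_le.1 (ex3_birk_abs3 ha m)).1⟩

lemma ex3_ev_le {a : ℕ → ℝ} (ha : Ex3Hyp a) {ε : ℝ} (hε : 0 < ε) :
    ∀ᶠ m in atTop, |birk a m| ≤ 1 / 2 + ε := by
  obtain ⟨N, hN⟩ := exists_nat_gt (4 / ε)
  have hN1 : 1 ≤ N + 1 := by omega
  rw [eventually_atTop]
  refine ⟨ex3T (N + 2), fun m hm => ?_⟩
  have h := ex3_ev_bound ha (N + 1) hN1 m hm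
  have h4 : (0:ℝ) < 4 / ε := by positivity
  have hN0 : (4 / ε : ℝ) < (N : ℝ) + 1 := by
    calc (4/ε : ℝ) < N := hN
    _ ≤ (N:ℝ) + 1 := by linarith
  have : 4 / ((N : ℝ) + 1) < ε := by
    rw [div_lt_iff₀ (by linarith)]
    rw [div_lt_iff₀ hε] at hN0
    linarith
  have hcast : ((N + 1 : ℕ) : ℝ) = (N : ℝ) + 1 := by push_cast; ring
  rw [hcast] at h
  linarith

lemma ex3_limsup {a : ℕ → ℝ} (ha : Ex3Hyp a) : limsup (birk a) atTop = 1 / 2 := by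
  apply le_antisymm
  · have key : ∀ ε > (0:ℝ), limsup (birk a) atTop ≤ 1 / 2 + ε := by
      intro ε hε
      apply limsup_le_of_le (ex3_bddBelow ha).isCoboundedUnder_le
      filter_upwards [ex3_ev_le ha hε] with m hm
      exact le_trans (le_abs_self _) hm |>.trans (le_refl _) |>.trans (le_refl _)
    by_contra hc
    push_neg at hc
    have := key ((limsup (birk a) atTop - 1/2)/2) (by linarith)
    linarith
  · apply le_limsup_of_frequently_le _ (ex3_bddAbove ha)
    rw [frequently_atTop]
    intro M
    refine ⟨ex3T (2 * M + 1), le_trans (le_trans (by omega) (ex3T_ge (2*M+1))) le_rfl, ?_⟩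
    rw [ex3_birkT_odd ha (2*M+1) (by omega) ⟨M, by ring⟩]
    have h0 : (0:ℝ) < 2 * ((2*M+1 : ℕ) : ℝ) := by positivity
    rw [le_div_iff₀ h0]
    push_cast
    linarith

lemma ex3_liminf {a : ℕ → ℝ} (ha : Ex3Hyp a) : liminf (birk a) atTop = -(1 / 2) := by
  apply le_antisymm
  · apply liminf_le_of_frequently_le _ (ex3_bddBelow ha)
    rw [frequently_atTop]
    intro M
    refine ⟨ex3T (2 * M + 2), le_trans (le_trans (by omega) (ex3T_ge (2*M+2))) le_rfl, ?_⟩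
    rw [ex3_birkT_even ha (2*M+2) (by omega) ⟨M+1, by ring⟩]
    have h0 : (0:ℝ) < 2 * (((2*M+2 : ℕ) : ℝ) + 1) := by positivity
    rw [neg_le_neg_iff, le_div_iff₀ h0]
    push_cast
    linarith
  · have key : ∀ ε > (0:ℝ), -(1/2) - ε ≤ liminf (birk a) atTop := by
      intro ε hε
      apply le_liminf_of_le (ex3_bddAbove ha).isCoboundedUnder_ge
      filter_upwards [ex3_ev_le ha hε] with m hm
      have := (abs_le.1 hm).1
      linarith
    by_contra hc
    push_neg at hc
    have := key ((-(1/2) - liminf (birk a) atTop)/2) (by linarith)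
    linarith

lemma ex3_psum (c : ℝ) : ∀ m : ℕ, ∑ j ∈ range m, (((j:ℝ)+1) * (c - ((j:ℝ)+1)))
    = c * (m:ℝ) * ((m:ℝ)+1) / 2 - (m:ℝ) * ((m:ℝ)+1) * (2*(m:ℝ)+1) / 6 := by
  intro m
  induction m with
  | zero => simp
  | succ m ih =>
    rw [Finset.sum_range_succ, ih]
    push_cast; ring

lemma ex3_icc_split (f : ℕ → ℝ) (M : ℕ) : ∀ k : ℕ,
    ∑ i ∈ Finset.Icc 1 (M + k), f i = ∑ i ∈ Finset.Icc 1 M, f i + ∑ j ∈ range k, f (M + j + 1) := by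
  intro k
  induction k with
  | zero => simp
  | succ k ih =>
    have h1 : M + (k + 1) = (M + k) + 1 := by omega
    rw [h1, Finset.sum_Icc_succ_top (by omega) f, ih, Finset.sum_range_succ]
    ring

lemma ex3_crude {a : ℕ → ℝ} (ha : Ex3Hyp a) (s k : ℕ) :
    |∑ j ∈ range k, birk a (s + j + 1)| ≤ 3 * (k : ℝ) := by
  calc |∑ j ∈ range k, birk a (s + j + 1)| ≤ ∑ j ∈ range k, |birk a (s + j + 1)| :=
        Finset.abs_sum_le_sum_abs _ _
    _ ≤ ∑ j ∈ range k, (3:ℝ) := Finset.sum_le_sum fun j _ => ex3_birk_abs3 ha _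
    _ = 3 * (k : ℝ) := by simp [mul_comm]

lemma ex3_crude' {a : ℕ → ℝ} (ha : Ex3Hyp a) (m : ℕ) :
    |∑ i ∈ Finset.Icc 1 m, birk a i| ≤ 3 * (m : ℝ) := by
  have := ex3_crude ha 0 m
  simp only [Nat.zero_add] at this
  calc |∑ i ∈ Finset.Icc 1 m, birk a i| = |∑ j ∈ range m, birk a (0 + j + 1)| := by
        rw [show ∑ i ∈ Finset.Icc 1 m, birk a i = ∑ i ∈ Finset.Icc 1 (0 + m), birk a i by norm_num,
          ex3_icc_split]
        simp
    _ ≤ 3 * (m : ℝ) := ex3_crude ha 0 m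

/-- Sum of the partial sums over one full block. -/
lemma ex3_blockS {a : ℕ → ℝ} (ha : Ex3Hyp a) (n : ℕ) :
    ∑ j ∈ range (n+1), (∑ i ∈ range (ex3T n + j + 1), a i) =
      ((n:ℝ)+1) * ex3s n + (-1:ℝ)^n * (((n:ℝ)+1) * ((n:ℝ)+2) * (2*(n:ℝ)+3)) / 6 := by
  have hterm : ∀ j ∈ range (n+1), (∑ i ∈ range (ex3T n + j + 1), a i)
      = ex3s n + (-1:ℝ)^n / 2 * (((j:ℝ)+1) * ((2*(n:ℝ)+3) - ((j:ℝ)+1))) := by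
    intro j hj
    rw [Finset.mem_range] at hj
    have := ex3_mid ha n (j+1) (by omega)
    rw [show ex3T n + j + 1 = ex3T n + (j + 1) by omega, this]
    push_cast; ring
  rw [Finset.sum_congr rfl hterm, Finset.sum_add_distrib, Finset.sum_const, ← Finset.mul_sum,
    ex3_psum (2*(n:ℝ)+3) (n+1)]
  simp only [Finset.card_range, nsmul_eq_mul]
  push_cast; ring

/-- The crucial cancellation: over a pair of consecutive blocks the Birkhoff sums
almost cancel. -/
lemma ex3_pair {a : ℕ → ℝ} (ha : Ex3Hyp a) (n : ℕ) (hn : 1 ≤ n) :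
    |∑ j ∈ range (2*n+3), birk a (ex3T n + j + 1)| ≤ 21 := by
  have hn0 : (1 : ℝ) ≤ (n : ℝ) := by exact_mod_cast hn
  set M := ex3T (n+2) with hM
  have hMeq : ex3T n + (2*n+3) = M := by
    rw [hM, ex3T_succ, ex3T_succ]; omega
  have hMr : (M : ℝ) = ((n:ℝ)+2) * ((n:ℝ)+3) / 2 := by
    rw [hM, ex3T_cast]; push_cast; ring
  have hMpos : (0:ℝ) < (M:ℝ) := by rw [hMr]; nlinarith
  -- decompose each term
  have hdec : ∀ j ∈ range (2*n+3), birk a (ex3T n + j + 1) =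
      (∑ i ∈ range (ex3T n + j + 1), a i) / (M:ℝ) +
      (∑ i ∈ range (ex3T n + j + 1), a i) * ((M:ℝ) - ((ex3T n + j + 1 : ℕ):ℝ)) /
        (((ex3T n + j + 1 : ℕ):ℝ) * (M:ℝ)) := by
    intro j hj
    rw [Finset.mem_range] at hj
    have hipos : (0:ℝ) < ((ex3T n + j + 1 : ℕ):ℝ) := by positivity
    rw [birk]
    field_simp
    ring
  rw [Finset.sum_congr rfl hdec, Finset.sum_add_distrib]
  -- main term
  have hsplit : ∑ j ∈ range (2*n+3), (∑ i ∈ range (ex3T n + j + 1), a i)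
      = ∑ j ∈ range (n+1), (∑ i ∈ range (ex3T n + j + 1), a i)
      + ∑ j ∈ range (n+2), (∑ i ∈ range (ex3T (n+1) + j + 1), a i) := by
    rw [show 2*n+3 = (n+1) + (n+2) by omega, Finset.sum_range_add]
    congr 1
    apply Finset.sum_congr rfl
    intro j _
    congr 2
    rw [ex3T_succ]; omega
  have hmain : |∑ j ∈ range (2*n+3), (∑ i ∈ range (ex3T n + j + 1), a i)| ≤ 2*((n:ℝ)+2)^2 := by
    rw [hsplit, ex3_blockS ha n, ex3_blockS ha (n+1)]
    have hp : (-1:ℝ)^(n+1) = -(-1:ℝ)^n := by rw [pow_succ]; ring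
    rcases Nat.even_or_odd n with h | h
    · rw [hp, h.neg_one_pow, ex3s, ex3s, if_pos h,
        if_neg (by simp [Nat.even_add_one, h])]
      rw [abs_le]
      push_cast
      constructor <;> nlinarith
    · rw [hp, h.neg_one_pow, ex3s, ex3s, if_neg (Nat.not_even_iff_odd.2 h),
        if_pos (Nat.even_add_one.2 (Nat.not_even_iff_odd.2 h))]
      rw [abs_le]
      push_cast
      constructor <;> nlinarith
  have hmain2 : |(∑ j ∈ range (2*n+3), (∑ i ∈ range (ex3T n + j + 1), a i)) / (M:ℝ)| ≤ 4 := by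
    rw [abs_div, abs_of_pos hMpos, div_le_iff₀ hMpos]
    have : 2*((n:ℝ)+2)^2 ≤ 4 * (M:ℝ) := by rw [hMr]; nlinarith
    linarith
  -- error term
  have herr : |∑ j ∈ range (2*n+3),
      (∑ i ∈ range (ex3T n + j + 1), a i) * ((M:ℝ) - ((ex3T n + j + 1 : ℕ):ℝ)) /
        (((ex3T n + j + 1 : ℕ):ℝ) * (M:ℝ))| ≤ 17 := by
    have hterm : ∀ j ∈ range (2*n+3),
        |(∑ i ∈ range (ex3T n + j + 1), a i) * ((M:ℝ) - ((ex3T n + j + 1 : ℕ):ℝ)) /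
          (((ex3T n + j + 1 : ℕ):ℝ) * (M:ℝ))|
        ≤ (((n:ℝ)+3)^2/4) * (2*(n:ℝ)+3) / (((n:ℝ)*((n:ℝ)+1)/2) * (M:ℝ)) := by
      intro j hj
      rw [Finset.mem_range] at hj
      -- numerator bounds
      have hS : |∑ i ∈ range (ex3T n + j + 1), a i| ≤ ((n:ℝ)+3)^2/4 := by
        rcases Nat.lt_or_ge (j+1) (n+2) with hcase | hcase
        · have := ex3_absS ha n (j+1) (by omega)
          rw [show ex3T n + j + 1 = ex3T n + (j+1) by omega]
          have hmono : ((n:ℝ)+2)^2/4 ≤ ((n:ℝ)+3)^2/4 := by nlinarith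
          linarith
        · have hj2 : j + 1 = (n + 1) + (j - n) := by omega
          have hj3 : j - n ≤ (n+1) + 1 := by omega
          have := ex3_absS ha (n+1) (j-n) hj3
          rw [show ex3T n + j + 1 = ex3T (n+1) + (j - n) by rw [ex3T_succ]; omega]
          push_cast at this ⊢
          convert this using 3 <;> push_cast <;> ring
      have hile : ((ex3T n + j + 1 : ℕ):ℝ) ≥ (n:ℝ)*((n:ℝ)+1)/2 := by
        push_cast
        have := ex3T_cast n
        have h0 : (0:ℝ) ≤ (j:ℝ) := by positivity
        linarith
      have hipos : (0:ℝ) < (n:ℝ)*((n:ℝ)+1)/2 := by nlinarith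
      have hipos2 : (0:ℝ) < ((ex3T n + j + 1 : ℕ):ℝ) := lt_of_lt_of_le hipos hile
      have hgap : |(M:ℝ) - ((ex3T n + j + 1 : ℕ):ℝ)| ≤ 2*(n:ℝ)+3 := by
        have h1 : ex3T n + j + 1 ≤ M := by omega
        have h2 : (((ex3T n + j + 1:ℕ)):ℝ) ≤ (M:ℝ) := by exact_mod_cast h1
        have h3 : ((ex3T n : ℕ):ℝ) + 1 ≤ ((ex3T n + j + 1 : ℕ):ℝ) := by
          push_cast
          have h0 : (0:ℝ) ≤ (j:ℝ) := by positivity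
          linarith
        have h4 : (M:ℝ) = ((ex3T n:ℕ):ℝ) + (2*(n:ℝ)+3) := by
          rw [← hMeq]; push_cast; ring
        rw [abs_of_nonneg (by linarith)]
        linarith
      rw [abs_div, abs_mul, abs_mul, abs_of_pos hipos2, abs_of_pos hMpos]
      apply div_le_div₀ (by positivity) _ (by positivity) _
      · apply mul_le_mul hS hgap (abs_nonneg _) (by positivity)
      · exact mul_le_mul_of_nonneg_right hile (le_of_lt hMpos)
    calc |∑ j ∈ range (2*n+3),
        (∑ i ∈ range (ex3T n + j + 1), a i) * ((M:ℝ) - ((ex3T n + j + 1 : ℕ):ℝ)) /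
          (((ex3T n + j + 1 : ℕ):ℝ) * (M:ℝ))|
        ≤ ∑ j ∈ range (2*n+3), |(∑ i ∈ range (ex3T n + j + 1), a i) *
            ((M:ℝ) - ((ex3T n + j + 1 : ℕ):ℝ)) / (((ex3T n + j + 1 : ℕ):ℝ) * (M:ℝ))| :=
          Finset.abs_sum_le_sum_abs _ _
      _ ≤ ∑ j ∈ range (2*n+3), (((n:ℝ)+3)^2/4) * (2*(n:ℝ)+3) / (((n:ℝ)*((n:ℝ)+1)/2) * (M:ℝ)) :=
          Finset.sum_le_sum hterm
      _ = (2*(n:ℝ)+3) * ((((n:ℝ)+3)^2/4) * (2*(n:ℝ)+3) / (((n:ℝ)*((n:ℝ)+1)/2) * (M:ℝ))) := by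
          rw [Finset.sum_const, Finset.card_range, nsmul_eq_mul]; push_cast; ring
      _ ≤ 17 := by
          rw [hMr, mul_div_assoc']
          have hd : (0:ℝ) < (n:ℝ)*((n:ℝ)+1)/2 * (((n:ℝ)+2)*((n:ℝ)+3)/2) :=
            mul_pos (by nlinarith) (by nlinarith)
          rw [div_le_iff₀ hd]
          nlinarith [sq_nonneg ((n:ℝ)-1), sq_nonneg (n:ℝ)]
  calc |∑ j ∈ range (2*n+3), (∑ i ∈ range (ex3T n + j + 1), a i) / (M:ℝ) +
        ∑ j ∈ range (2*n+3), (∑ i ∈ range (ex3T n + j + 1), a i) *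
          ((M:ℝ) - ((ex3T n + j + 1 : ℕ):ℝ)) / (((ex3T n + j + 1 : ℕ):ℝ) * (M:ℝ))| ≤ _ + _ :=
        abs_add_le _ _
    _ ≤ 4 + 17 := by
        rw [← Finset.sum_div]
        exact add_le_add hmain2 herr
    _ = 21 := by norm_num

lemma ex3_csumT {a : ℕ → ℝ} (ha : Ex3Hyp a) :
    ∀ n : ℕ, |∑ i ∈ Finset.Icc 1 (ex3T n), birk a i| ≤ 18 + 11 * (n : ℝ) := by
  intro n
  induction n using Nat.strong_induction_on with
  | _ n ih =>
    match n with
    | 0 => simpa [ex3T] using by norm_num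
    | 1 =>
      have := ex3_crude' ha (ex3T 1)
      have h1 : ex3T 1 = 1 := by simp [ex3T]
      rw [h1] at this ⊢
      norm_num at this ⊢
      linarith
    | 2 =>
      have := ex3_crude' ha (ex3T 2)
      have h1 : ex3T 2 = 3 := by simp [ex3T]
      rw [h1] at this ⊢
      norm_num at this ⊢
      linarith
    | 3 =>
      have := ex3_crude' ha (ex3T 3)
      have h1 : ex3T 3 = 6 := by simp [ex3T]
      rw [h1] at this ⊢
      norm_num at this ⊢
      linarith
    | (k+4) =>
      have hsplit : ex3T (k+4) = ex3T (k+2) + (2*(k+2)+3) := by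
        rw [ex3T_succ, ex3T_succ]; omega
      rw [hsplit, ex3_icc_split]
      have h1 := ih (k+2) (by omega)
      have h2 := ex3_pair ha (k+2) (by omega)
      calc |∑ i ∈ Finset.Icc 1 (ex3T (k+2)), birk a i +
            ∑ j ∈ range (2*(k+2)+3), birk a (ex3T (k+2) + j + 1)|
          ≤ |∑ i ∈ Finset.Icc 1 (ex3T (k+2)), birk a i| +
            |∑ j ∈ range (2*(k+2)+3), birk a (ex3T (k+2) + j + 1)| := abs_add_le _ _
        _ ≤ (18 + 11 * ((k:ℝ)+2)) + 21 := add_le_add (by push_cast at h1 ⊢; linarith) h2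
        _ ≤ 18 + 11 * (((k:ℝ)+4)) := by linarith
        _ = 18 + 11 * (((k+4 : ℕ):ℝ)) := by push_cast; ring

lemma ex3_csum {a : ℕ → ℝ} (ha : Ex3Hyp a) (n r : ℕ) (hr : r ≤ n + 1) :
    |∑ i ∈ Finset.Icc 1 (ex3T n + r), birk a i| ≤ 21 + 14 * (n : ℝ) := by
  rw [ex3_icc_split]
  have h1 := ex3_csumT ha n
  have h2 := ex3_crude ha (ex3T n) r
  have h3 : (r : ℝ) ≤ (n : ℝ) + 1 := by exact_mod_cast hr
  calc |∑ i ∈ Finset.Icc 1 (ex3T n), birk a i + ∑ j ∈ range r, birk a (ex3T n + j + 1)|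
      ≤ |∑ i ∈ Finset.Icc 1 (ex3T n), birk a i| + |∑ j ∈ range r, birk a (ex3T n + j + 1)| :=
        abs_add_le _ _
    _ ≤ (18 + 11 * (n:ℝ)) + 3 * (r:ℝ) := add_le_add h1 h2
    _ ≤ 21 + 14 * (n : ℝ) := by linarith

lemma ex3_holder_tendsto {a : ℕ → ℝ} (ha : Ex3Hyp a) :
    Tendsto (fun m : ℕ => holderMeans (birk a) 1 m) atTop (𝓝 0) := by
  have hH : ∀ m : ℕ, holderMeans (birk a) 1 m = (∑ i ∈ Finset.Icc 1 m, birk a i) / m := by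
    intro m
    simp [holderMeans]
  rw [Metric.tendsto_atTop]
  intro ε hε
  obtain ⟨N, hN⟩ := exists_nat_gt (70 / ε)
  refine ⟨ex3T (N + 2), fun m hm => ?_⟩
  obtain ⟨n, r, hn, hr, rfl⟩ := ex3_block_of_ge (N := N + 1) (by omega) hm
  have hn1 : 1 ≤ n := by omega
  have hn0 : (1 : ℝ) ≤ (n : ℝ) := by exact_mod_cast hn1
  have hnN : (N : ℝ) + 1 ≤ (n : ℝ) := by exact_mod_cast hn
  have hTm : ((ex3T n + r : ℕ):ℝ) ≥ (n:ℝ)*((n:ℝ)+1)/2 := by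
    push_cast
    have h0 : (0:ℝ) ≤ (r:ℝ) := by positivity
    linarith [ex3T_cast n]
  have hmpos : (0:ℝ) < ((ex3T n + r : ℕ):ℝ) := lt_of_lt_of_le (by nlinarith) hTm
  rw [Real.dist_eq, sub_zero, hH, abs_div, abs_of_pos hmpos]
  have hc := ex3_csum ha n r hr
  have step1 : |∑ i ∈ Finset.Icc 1 (ex3T n + r), birk a i| / ((ex3T n + r : ℕ):ℝ)
      ≤ (21 + 14 * (n:ℝ)) / ((n:ℝ)*((n:ℝ)+1)/2) :=
    div_le_div₀ (by nlinarith) hc (by nlinarith) hTm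
  have step2 : (21 + 14 * (n:ℝ)) / ((n:ℝ)*((n:ℝ)+1)/2) ≤ 70 / ((n:ℝ)+1) := by
    rw [div_le_div_iff₀ (by nlinarith) (by nlinarith)]
    nlinarith
  have step3 : 70 / ((n:ℝ)+1) ≤ 70 / ((N:ℝ)+1) :=
    div_le_div_of_nonneg_left (by norm_num) (by linarith) (by linarith)
  have step4 : 70 / ((N:ℝ)+1) < ε := by
    have h70 : (0:ℝ) < 70 / ε := by positivity
    rw [div_lt_iff₀ (by positivity)]
    rw [div_lt_iff₀ hε] at hN
    linarith
  linarith

/-- **Example 3** (an `L¹` counterexample).  Let `a` be the unbounded sequence whose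
`n`-th block (`n ≥ 1`) occupies positions `n(n-1)/2, …, n(n+1)/2 - 1`, with entry
`(-1)^{n+1} (n - r)` at offset `r` (`0 ≤ r < n`).  Then the Birkhoff averages do not
converge — at `m = n(n+1)/2` one has `B_m = (n+1)/(2n)` for `n` odd and
`B_m = -(n+2)/(2(n+1))` for `n` even, so `limsup B = 1/2` and `liminf B = -1/2` —
while the first-order Hölder means `H^{(1)}_m = (1/m) ∑_{i=1}^m B_i` do converge. -/
theorem exampleThree_first_holder_converges (a : ℕ → ℝ)
    (ha : ∀ n : ℕ, 1 ≤ n → ∀ r : ℕ, r < n →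
      a (n * (n - 1) / 2 + r) = (-1 : ℝ) ^ (n + 1) * ((n : ℝ) - (r : ℝ))) :
    (∀ n : ℕ, 1 ≤ n → Odd n →
      birk a (n * (n + 1) / 2) = ((n : ℝ) + 1) / (2 * (n : ℝ))) ∧
    (∀ n : ℕ, 1 ≤ n → Even n →
      birk a (n * (n + 1) / 2) = -(((n : ℝ) + 2) / (2 * ((n : ℝ) + 1)))) ∧
    limsup (birk a) atTop = 1 / 2 ∧
    liminf (birk a) atTop = -(1 / 2) ∧
    (¬ ∃ L : ℝ, Tendsto (birk a) atTop (𝓝 L)) ∧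
    (∃ L : ℝ, Tendsto (fun m : ℕ => holderMeans (birk a) 1 m) atTop (𝓝 L)) := by
  have ha' : Ex3Hyp a := ha
  refine ⟨fun n hn ho => ex3_birkT_odd ha' n hn ho,
    fun n hn he => ex3_birkT_even ha' n hn he,
    ex3_limsup ha', ex3_liminf ha', ?_, ⟨0, ex3_holder_tendsto ha'⟩⟩
  rintro ⟨L, hL⟩
  have h1 : L = 1 / 2 := by rw [← hL.limsup_eq, ex3_limsup ha']
  have h2 : L = -(1 / 2) := by rw [← hL.liminf_eq, ex3_liminf ha']
  rw [h1] at h2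
  norm_num at h2
end

section
/- Let c₁ ≠ c₂ be real numbers and let (T_j)_{j≥1} be positive integers satisfying T_{j+1} / (∑_{i=1}^{j} T_i) → ∞ as j → ∞. Let a : ℕ → ℝ be the sequence whose j-th consecutive block has length T_j and constant value c₁ for j odd and c₂ for j even. Then the Birkhoff averages B_n satisfy liminf B_n = min(c₁, c₂) and limsup B_n = max(c₁, c₂), and for every k ≥ 0 the Hölder means satisfy liminf_n H^{(k)}_n = min(c₁, c₂) and limsup_n H^{(k)}_n = max(c₁, c₂) (type B2). In particular this applies when T_{j+1} ≥ K e^{T_j} for some K > 0 with T_j → ∞, as for the observable values along orbits of the non-hyperbolic modification of Bowen's example. -/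
open Filter Topology

lemma sum_one_div_sqrt_le (n : ℕ) :
    ∑ i ∈ Finset.Icc 1 n, (1 / Real.sqrt i) ≤ 2 * Real.sqrt n := by
  induction n with
  | zero => simp
  | succ n ih =>
    rw [Finset.sum_Icc_succ_top (by omega : 1 ≤ n + 1)]
    have h0 : (0:ℝ) ≤ n := by positivity
    have h1 : (0:ℝ) ≤ (n:ℝ) + 1 := by positivity
    have hs : Real.sqrt ((n:ℝ)+1) ^ 2 = (n:ℝ)+1 := Real.sq_sqrt h1
    have hs' : Real.sqrt (n:ℝ) ^ 2 = (n:ℝ) := Real.sq_sqrt h0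
    have hpos : 0 < Real.sqrt ((n:ℝ)+1) := Real.sqrt_pos.2 (by linarith)
    have hmono : Real.sqrt (n:ℝ) ≤ Real.sqrt ((n:ℝ)+1) := Real.sqrt_le_sqrt (by linarith)
    have key : 1 / Real.sqrt ((n:ℝ)+1) ≤ 2 * (Real.sqrt ((n:ℝ)+1) - Real.sqrt n) := by
      rw [div_le_iff₀ hpos]
      nlinarith [Real.sqrt_nonneg (n:ℝ)]
    have hcast : ((n+1 : ℕ) : ℝ) = (n:ℝ) + 1 := by push_cast; ring
    rw [hcast]
    linarith

lemma aux_limsup (f : ℕ → ℝ) (L U : ℝ) (hU : ∀ᶠ n in atTop, f n ≤ U)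
    (hL : ∀ᶠ n in atTop, L ≤ f n) (φ : ℕ → ℕ) (hφ : Tendsto φ atTop atTop)
    (hconv : Tendsto (fun m => f (φ m)) atTop (𝓝 U)) :
    limsup f atTop = U := by
  have hbdd : IsBoundedUnder (· ≤ ·) atTop f := ⟨U, hU⟩
  have hcob : IsCoboundedUnder (· ≤ ·) atTop f :=
    (IsBoundedUnder.isCoboundedUnder_le ⟨L, hL⟩)
  have h1 : limsup f atTop ≤ U := limsup_le_of_le hcob hU
  have h2 : U ≤ limsup f atTop := by
    apply le_of_forall_pos_le_add
    intro ε hε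
    have hfreq : ∃ᶠ n in atTop, U - ε ≤ f n := by
      apply hφ.frequently
      apply Eventually.frequently
      filter_upwards [hconv (Metric.ball_mem_nhds U hε)] with m hm
      have := abs_lt.1 (mem_ball_iff_norm.1 hm)
      linarith [this.1]
    have := le_limsup_of_frequently_le hfreq hbdd
    linarith
  linarith

lemma aux_liminf (f : ℕ → ℝ) (L U : ℝ) (hU : ∀ᶠ n in atTop, f n ≤ U)
    (hL : ∀ᶠ n in atTop, L ≤ f n) (φ : ℕ → ℕ) (hφ : Tendsto φ atTop atTop)
    (hconv : Tendsto (fun m => f (φ m)) atTop (𝓝 L)) :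
    liminf f atTop = L := by
  have hbdd : IsBoundedUnder (· ≥ ·) atTop f := ⟨L, hL⟩
  have hcob : IsCoboundedUnder (· ≥ ·) atTop f :=
    (IsBoundedUnder.isCoboundedUnder_ge ⟨U, hU⟩)
  have h1 : L ≤ liminf f atTop := le_liminf_of_le hcob hL
  have h2 : liminf f atTop ≤ L := by
    apply le_of_forall_pos_le_add
    intro ε hε
    have hfreq : ∃ᶠ n in atTop, f n ≤ L + ε := by
      apply hφ.frequently
      apply Eventually.frequently
      filter_upwards [hconv (Metric.ball_mem_nhds L hε)] with m hm
      have := abs_lt.1 (mem_ball_iff_norm.1 hm)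
      linarith [this.2]
    exact liminf_le_of_frequently_le hfreq hbdd
  linarith

lemma mean_bounds (g : ℕ → ℝ) (L U : ℝ) (n : ℕ) (hn : 1 ≤ n)
    (h : ∀ i ∈ Finset.Icc 1 n, L ≤ g i ∧ g i ≤ U) :
    L ≤ (∑ i ∈ Finset.Icc 1 n, g i) / n ∧ (∑ i ∈ Finset.Icc 1 n, g i) / n ≤ U := by
  have hcard : (Finset.Icc 1 n).card = n := by rw [Nat.card_Icc]; omega
  have hnpos : (0:ℝ) < n := by exact_mod_cast hn
  constructor
  · rw [le_div_iff₀ hnpos]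
    calc L * n = ∑ _i ∈ Finset.Icc 1 n, L := by rw [Finset.sum_const, hcard]; ring
    _ ≤ _ := Finset.sum_le_sum (fun i hi => (h i hi).1)
  · rw [div_le_iff₀ hnpos]
    calc (∑ i ∈ Finset.Icc 1 n, g i) ≤ ∑ _i ∈ Finset.Icc 1 n, U :=
          Finset.sum_le_sum (fun i hi => (h i hi).2)
    _ = U * n := by rw [Finset.sum_const, hcard]; ring

/-- **Section 5.2** (modified Bowen example, discrete content).  Let `c₁ ≠ c₂` and
let `(T_j)_{j ≥ 1}` be positive integers with `T_{j+1} / ∑_{i=1}^j T_i → ∞`.  Let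
`a` be the sequence whose `j`-th consecutive block (of length `T_j`, occupying
positions `∑_{i<j} T_i ≤ n < ∑_{i≤j} T_i`) has constant value `c₁` for `j` odd and
`c₂` for `j` even.  Then `liminf B = min c₁ c₂`, `limsup B = max c₁ c₂`, and all
Hölder means have the same liminf and limsup (type B2). -/
theorem modified_bowen_type_B2 (c₁ c₂ : ℝ) (hc : c₁ ≠ c₂)
    (T : ℕ → ℕ) (hTpos : ∀ j : ℕ, 1 ≤ j → 1 ≤ T j)
    (hgrow : Tendsto (fun j : ℕ => (T (j + 1) : ℝ) / ∑ i ∈ Finset.Icc 1 j, (T i : ℝ))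
      atTop atTop)
    (a : ℕ → ℝ)
    (ha : ∀ j : ℕ, 1 ≤ j → ∀ n : ℕ,
      (∑ i ∈ Finset.Icc 1 (j - 1), T i) ≤ n → n < ∑ i ∈ Finset.Icc 1 j, T i →
      a n = if j % 2 = 1 then c₁ else c₂) :
    liminf (birk a) atTop = min c₁ c₂ ∧ limsup (birk a) atTop = max c₁ c₂ ∧
    ∀ k : ℕ, liminf (fun n : ℕ => holderMeans (birk a) k n) atTop = min c₁ c₂ ∧
      limsup (fun n : ℕ => holderMeans (birk a) k n) atTop = max c₁ c₂ := by
  classical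
  set L := min c₁ c₂ with hLdef
  set U := max c₁ c₂ with hUdef
  have hLU : L ≤ U := min_le_max
  set S : ℕ → ℕ := fun j => ∑ i ∈ Finset.Icc 1 j, T i with hSdef
  set c : ℕ → ℝ := fun j => if j % 2 = 1 then c₁ else c₂ with hcdef
  have hS0 : S 0 = 0 := by simp [hSdef]
  have hSsucc : ∀ j, S (j+1) = S j + T (j+1) := by
    intro j
    simp only [hSdef]
    rw [Finset.sum_Icc_succ_top (by omega : 1 ≤ j + 1)]
  have hSlt : ∀ j, S j < S (j+1) := by
    intro j; have := hTpos (j+1) (by omega); rw [hSsucc]; omega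
  have hSge : ∀ j, j ≤ S j := by
    intro j; induction j with
    | zero => omega
    | succ n ih => have := hSlt n; omega
  have hmem : ∀ n : ℕ, ∃ j, 1 ≤ j ∧ S (j-1) ≤ n ∧ n < S j := by
    intro n
    have hex : ∃ j, n < S j := ⟨n+1, by have := hSge (n+1); omega⟩
    set j := Nat.find hex with hj
    have hjlt : n < S j := Nat.find_spec hex
    have hj1 : 1 ≤ j := by
      by_contra h
      have : j = 0 := by omega
      rw [this, hS0] at hjlt; omega
    refine ⟨j, hj1, ?_, hjlt⟩
    have := Nat.find_min hex (m := j - 1) (by omega)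
    omega
  have ha' : ∀ j : ℕ, 1 ≤ j → ∀ n : ℕ, S (j-1) ≤ n → n < S j → a n = c j :=
    fun j hj n h1 h2 => ha j hj n h1 h2
  have hcLU : ∀ j, L ≤ c j ∧ c j ≤ U := by
    intro j
    show L ≤ (if j % 2 = 1 then c₁ else c₂) ∧ (if j % 2 = 1 then c₁ else c₂) ≤ U
    by_cases h : j % 2 = 1
    · rw [if_pos h]; exact ⟨min_le_left _ _, le_max_left _ _⟩
    · rw [if_neg h]; exact ⟨min_le_right _ _, le_max_right _ _⟩
  have haLU : ∀ n, L ≤ a n ∧ a n ≤ U := by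
    intro n
    obtain ⟨j, hj1, h1, h2⟩ := hmem n
    rw [ha' j hj1 n h1 h2]
    exact hcLU j
  -- block sum bound
  have hsum : ∀ j, 1 ≤ j → ∀ n, S (j-1) ≤ n → n ≤ S j →
      |∑ i ∈ Finset.range n, (a i - c j)| ≤ (U - L) * S (j-1) := by
    intro j hj n h1 h2
    have hsplit : ∑ i ∈ Finset.range n, (a i - c j)
        = ∑ i ∈ Finset.range (S (j-1)), (a i - c j)
          + ∑ i ∈ Finset.Ico (S (j-1)) n, (a i - c j) := by
      rw [Finset.range_eq_Ico, Finset.range_eq_Ico]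
      exact (Finset.sum_Ico_consecutive (fun i => a i - c j) (Nat.zero_le _) h1).symm
    have hzero : ∑ i ∈ Finset.Ico (S (j-1)) n, (a i - c j) = 0 := by
      apply Finset.sum_eq_zero
      intro i hi
      rw [Finset.mem_Ico] at hi
      rw [ha' j hj i hi.1 (by omega)]
      ring
    rw [hsplit, hzero, add_zero]
    calc |∑ i ∈ Finset.range (S (j-1)), (a i - c j)|
        ≤ ∑ i ∈ Finset.range (S (j-1)), |a i - c j| := Finset.abs_sum_le_sum_abs _ _
      _ ≤ ∑ _i ∈ Finset.range (S (j-1)), (U - L) := by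
          apply Finset.sum_le_sum
          intro i _
          have h3 := haLU i
          have h4 := hcLU j
          rw [abs_le]; constructor <;> linarith [h3.1, h3.2, h4.1, h4.2]
      _ = (U - L) * S (j-1) := by rw [Finset.sum_const, Finset.card_range]; push_cast; ring
  -- uniform bounds on Hölder means
  have hHB : ∀ k n, 1 ≤ n → L ≤ holderMeans (birk a) k n ∧ holderMeans (birk a) k n ≤ U := by
    intro k
    induction k with
    | zero =>
      intro n hn
      have hnpos : (0:ℝ) < n := by exact_mod_cast hn
      show L ≤ birk a n ∧ birk a n ≤ U
      unfold birk
      constructor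
      · rw [le_div_iff₀ hnpos]
        calc L * n = ∑ _i ∈ Finset.range n, L := by
              rw [Finset.sum_const, Finset.card_range]; ring
          _ ≤ _ := Finset.sum_le_sum (fun i _ => (haLU i).1)
      · rw [div_le_iff₀ hnpos]
        calc (∑ i ∈ Finset.range n, a i) ≤ ∑ _i ∈ Finset.range n, U :=
              Finset.sum_le_sum (fun i _ => (haLU i).2)
          _ = U * n := by rw [Finset.sum_const, Finset.card_range]; ring
    | succ k ih =>
      intro n hn
      show L ≤ (∑ i ∈ Finset.Icc 1 n, holderMeans (birk a) k i) / n ∧ _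
      exact mean_bounds _ L U n hn (fun i hi => ih i (Finset.mem_Icc.1 hi).1)
  -- key estimate
  have hA : ∀ k, ∀ j, 1 ≤ j → ∀ n, S (j-1) < n → n ≤ S j →
      |holderMeans (birk a) k n - c j|
        ≤ 3^k * (U - L) * Real.sqrt ((S (j-1) : ℝ) / n) := by
    intro k
    induction k with
    | zero =>
      intro j hj n h1 h2
      have hnpos : (0:ℝ) < n := by exact_mod_cast (by omega : 0 < n)
      have hratio : (0:ℝ) ≤ (S (j-1) : ℝ) / n := by positivity
      have hratio1 : (S (j-1) : ℝ) / n ≤ 1 := by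
        rw [div_le_one hnpos]; exact_mod_cast h1.le
    
      have hxs : (S (j-1) : ℝ) / n ≤ Real.sqrt ((S (j-1) : ℝ) / n) := by
        rw [Real.le_sqrt hratio hratio]
        nlinarith
      show |birk a n - c j| ≤ _
      have : birk a n - c j = (∑ i ∈ Finset.range n, (a i - c j)) / n := by
        unfold birk
        rw [Finset.sum_sub_distrib, Finset.sum_const, Finset.card_range, sub_div]
        congr 1
        field_simp
        rw [nsmul_eq_mul]; ring
      rw [this, abs_div, abs_of_pos hnpos]
      rw [div_le_iff₀ hnpos]
      calc |∑ i ∈ Finset.range n, (a i - c j)| ≤ (U - L) * S (j-1) :=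
            hsum j hj n h1.le h2
        _ = (U - L) * ((S (j-1) : ℝ)/n) * n := by field_simp
        _ ≤ (U - L) * Real.sqrt ((S (j-1):ℝ)/n) * n := by
            have hUL : (0:ℝ) ≤ U - L := by linarith
            apply mul_le_mul_of_nonneg_right _ hnpos.le
            exact mul_le_mul_of_nonneg_left hxs hUL
        _ = 3^0 * (U - L) * Real.sqrt ((S (j-1):ℝ)/n) * n := by ring
    | succ k ih =>
      intro j hj n h1 h2
      set S' := S (j-1) with hS'
      have hnpos : (0:ℝ) < n := by exact_mod_cast (by omega : 0 < n)
      have hUL : (0:ℝ) ≤ U - L := by linarith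
      have hicc : Finset.Icc 1 n = Finset.Ioc 0 n := by
        ext i; simp [Nat.lt_iff_add_one_le]
      have hsplit : ∑ i ∈ Finset.Icc 1 n, (holderMeans (birk a) k i - c j)
          = ∑ i ∈ Finset.Ioc 0 S', (holderMeans (birk a) k i - c j)
            + ∑ i ∈ Finset.Ioc S' n, (holderMeans (birk a) k i - c j) := by
        rw [hicc, Finset.sum_Ioc_consecutive _ (Nat.zero_le _) h1.le]
      have hb1 : |∑ i ∈ Finset.Ioc 0 S', (holderMeans (birk a) k i - c j)|
          ≤ (U - L) * S' := by
        calc _ ≤ ∑ i ∈ Finset.Ioc 0 S', |holderMeans (birk a) k i - c j| :=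
              Finset.abs_sum_le_sum_abs _ _
          _ ≤ ∑ _i ∈ Finset.Ioc 0 S', (U - L) := by
              apply Finset.sum_le_sum
              intro i hi
              rw [Finset.mem_Ioc] at hi
              have h3 := hHB k i (by omega)
              have h4 := hcLU j
              rw [abs_le]; constructor <;> linarith [h3.1, h3.2, h4.1, h4.2]
          _ = (U - L) * S' := by
              rw [Finset.sum_const, Nat.card_Ioc, Nat.sub_zero]; push_cast; ring
      have hb2 : |∑ i ∈ Finset.Ioc S' n, (holderMeans (birk a) k i - c j)|
          ≤ 3^k * (U - L) * Real.sqrt S' * (2 * Real.sqrt n) := by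
        calc _ ≤ ∑ i ∈ Finset.Ioc S' n, |holderMeans (birk a) k i - c j| :=
              Finset.abs_sum_le_sum_abs _ _
          _ ≤ ∑ i ∈ Finset.Ioc S' n, 3^k * (U - L) * (Real.sqrt S' * (1 / Real.sqrt i)) := by
              apply Finset.sum_le_sum
              intro i hi
              rw [Finset.mem_Ioc] at hi
              have := ih j hj i hi.1 (le_trans hi.2 h2)
              have heq : Real.sqrt ((S':ℝ)/i) = Real.sqrt S' * (1 / Real.sqrt i) := by
                rw [Real.sqrt_div' _ (Nat.cast_nonneg i)]
                ring
              rw [← heq]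
              exact this
          _ = 3^k * (U - L) * ∑ i ∈ Finset.Ioc S' n, Real.sqrt S' * (1 / Real.sqrt i) := by
              rw [Finset.mul_sum]
          _ ≤ 3^k * (U - L) * (Real.sqrt S' * (2 * Real.sqrt n)) := by
              apply mul_le_mul_of_nonneg_left _ (by positivity)
              rw [← Finset.mul_sum]
              apply mul_le_mul_of_nonneg_left _ (Real.sqrt_nonneg _)
              calc ∑ i ∈ Finset.Ioc S' n, (1 / Real.sqrt i)
                  ≤ ∑ i ∈ Finset.Icc 1 n, (1 / Real.sqrt i) := by
                    apply Finset.sum_le_sum_of_subset_of_nonneg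
                    · intro i hi
                      rw [Finset.mem_Ioc] at hi
                      rw [Finset.mem_Icc]
                      omega
                    · intro i _ _
                      positivity
                _ ≤ 2 * Real.sqrt n := sum_one_div_sqrt_le n
          _ = 3^k * (U - L) * Real.sqrt S' * (2 * Real.sqrt n) := by ring
      have hkey : |∑ i ∈ Finset.Icc 1 n, (holderMeans (birk a) k i - c j)|
          ≤ (U - L) * S' + 3^k * (U - L) * Real.sqrt S' * (2 * Real.sqrt n) := by
        rw [hsplit]
        exact le_trans (abs_add_le _ _) (add_le_add hb1 hb2)
      have hform : holderMeans (birk a) (k+1) n - c j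
          = (∑ i ∈ Finset.Icc 1 n, (holderMeans (birk a) k i - c j)) / n := by
        show (∑ i ∈ Finset.Icc 1 n, holderMeans (birk a) k i) / n - c j = _
        rw [Finset.sum_sub_distrib, Finset.sum_const, Nat.card_Icc]
        have : (n + 1 - 1 : ℕ) = n := by omega
        rw [this, sub_div]
        congr 1
        field_simp
        rw [nsmul_eq_mul]; ring
      rw [hform, abs_div, abs_of_pos hnpos, div_le_iff₀ hnpos]
      have hratio : (0:ℝ) ≤ (S' : ℝ) / n := by positivity
      have hratio1 : (S' : ℝ) / n ≤ 1 := by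
        rw [div_le_one hnpos]; exact_mod_cast h1.le
      have hxs : (S' : ℝ) / n ≤ Real.sqrt ((S' : ℝ) / n) := by
        rw [Real.le_sqrt hratio hratio]; nlinarith
      have hsqrtmul : Real.sqrt ((S':ℝ)/n) * n = Real.sqrt (S' : ℝ) * Real.sqrt n := by
        rw [Real.sqrt_div' _ (Nat.cast_nonneg n), div_mul_eq_mul_div, mul_div_assoc,
          Real.div_sqrt]
      calc |∑ i ∈ Finset.Icc 1 n, (holderMeans (birk a) k i - c j)|
          ≤ (U - L) * S' + 3^k * (U - L) * Real.sqrt S' * (2 * Real.sqrt n) := hkey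
        _ = (U - L) * ((S':ℝ)/n) * n + 2 * 3^k * (U - L) * (Real.sqrt S' * Real.sqrt n) := by
            field_simp
        _ = (U - L) * ((S':ℝ)/n) * n + 2 * 3^k * (U - L) * (Real.sqrt ((S':ℝ)/n) * n) := by
            rw [hsqrtmul]
        _ ≤ (U - L) * Real.sqrt ((S':ℝ)/n) * n + 2 * 3^k * (U - L) * (Real.sqrt ((S':ℝ)/n) * n) := by
            have := mul_le_mul_of_nonneg_left hxs hUL
            nlinarith
        _ = (1 + 2 * 3^k) * ((U - L) * (Real.sqrt ((S':ℝ)/n) * n)) := by ring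
        _ ≤ 3^(k+1) * ((U - L) * (Real.sqrt ((S':ℝ)/n) * n)) := by
            have h3 : (1:ℝ) + 2 * 3^k ≤ 3^(k+1) := by
              have : (1:ℝ) ≤ 3^k := one_le_pow₀ (by norm_num : (1:ℝ) ≤ 3)
              rw [pow_succ]
              linarith
            have hsq : (0:ℝ) ≤ Real.sqrt ((S':ℝ)/n) := Real.sqrt_nonneg _
            apply mul_le_mul_of_nonneg_right h3
            positivity
        _ = 3^(k+1) * (U - L) * Real.sqrt ((S':ℝ)/n) * n := by ring
  -- ratio tends to 0
  have hcastS : ∀ j, ((S j : ℕ) : ℝ) = ∑ i ∈ Finset.Icc 1 j, (T i : ℝ) := by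
    intro j; simp [hSdef]
  have hgrow' : Tendsto (fun j : ℕ => (T (j + 1) : ℝ) / (S j : ℝ)) atTop atTop := by
    simp only [hcastS]; exact hgrow
  have hρ : Tendsto (fun m : ℕ => (S m : ℝ) / (S (m + 1) : ℝ)) atTop (𝓝 0) := by
    have hinv : Tendsto (fun j : ℕ => ((T (j + 1) : ℝ) / (S j : ℝ))⁻¹) atTop (𝓝 0) :=
      hgrow'.inv_tendsto_atTop
    apply squeeze_zero' ?_ ?_ hinv
    · filter_upwards with m; positivity
    · filter_upwards [eventually_ge_atTop 1] with m hm
      have hSm : (0:ℝ) < (S m : ℝ) := by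
        have := hSge m; exact_mod_cast (by omega : 0 < S m)
      have hT : (0:ℝ) < (T (m+1) : ℝ) := by
        have := hTpos (m+1) (by omega); exact_mod_cast (by omega : 0 < T (m+1))
      have hTS : (T (m+1) : ℝ) ≤ (S (m+1) : ℝ) := by
        have := hSsucc m; exact_mod_cast (by omega : T (m+1) ≤ S (m+1))
      rw [inv_div]
      exact div_le_div_of_nonneg_left hSm.le hT hTS
  -- convergence along subsequences of block ends
  have hconv : ∀ (k : ℕ) (v : ℝ) (g : ℕ → ℕ), (∀ m, 1 ≤ g m) → Tendsto g atTop atTop →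
      (∀ m, c (g m) = v) →
      Tendsto (fun m => holderMeans (birk a) k (S (g m))) atTop (𝓝 v) := by
    intro k v g hg1 hgt hcv
    have hgt' : Tendsto (fun m => g m - 1) atTop atTop := by
      rw [tendsto_atTop_atTop] at hgt ⊢
      intro b
      obtain ⟨N, hN⟩ := hgt (b + 1)
      exact ⟨N, fun m hm => by have := hN m hm; omega⟩
    have h0 : Tendsto (fun m => ((S (g m - 1) : ℝ) / (S (g m - 1 + 1) : ℝ))) atTop (𝓝 0) :=
      hρ.comp hgt'
    have h0' : Tendsto
        (fun m => 3^k * (U - L) * Real.sqrt ((S (g m - 1) : ℝ) / (S (g m - 1 + 1) : ℝ)))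
        atTop (𝓝 0) := by
      have hs := (Real.continuous_sqrt.tendsto 0).comp h0
      rw [Real.sqrt_zero] at hs
      simpa using hs.const_mul ((3:ℝ)^k * (U - L))
    have hbound : ∀ m, ‖holderMeans (birk a) k (S (g m)) - v‖
        ≤ 3^k * (U - L) * Real.sqrt ((S (g m - 1) : ℝ) / (S (g m - 1 + 1) : ℝ)) := by
      intro m
      have he : g m - 1 + 1 = g m := by have := hg1 m; omega
      rw [Real.norm_eq_abs, he, ← hcv m]
      exact hA k (g m) (hg1 m) (S (g m)) (by rw [← he]; exact hSlt (g m - 1)) le_rfl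
    have hzero : Tendsto (fun m => holderMeans (birk a) k (S (g m)) - v) atTop (𝓝 0) :=
      squeeze_zero_norm hbound h0'
    have := hzero.add (tendsto_const_nhds (x := v))
    simpa using this
  -- main computation for each k
  have hmain : ∀ k : ℕ, liminf (fun n : ℕ => holderMeans (birk a) k n) atTop = L ∧
      limsup (fun n : ℕ => holderMeans (birk a) k n) atTop = U := by
    intro k
    have hUb : ∀ᶠ n in atTop, holderMeans (birk a) k n ≤ U := by
      filter_upwards [eventually_ge_atTop 1] with n hn using (hHB k n hn).2
    have hLb : ∀ᶠ n in atTop, L ≤ holderMeans (birk a) k n := by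
      filter_upwards [eventually_ge_atTop 1] with n hn using (hHB k n hn).1
    have hodd : Tendsto (fun m => holderMeans (birk a) k (S (2*m+1))) atTop (𝓝 c₁) := by
      apply hconv k c₁ (fun m => 2*m+1) (fun m => by show 1 ≤ 2*m+1; omega)
        (tendsto_atTop_mono (fun m => by simp only [id_eq]; omega) tendsto_id)
      intro m
      show (if (2*m+1) % 2 = 1 then c₁ else c₂) = c₁
      rw [if_pos (by omega)]
    have heven : Tendsto (fun m => holderMeans (birk a) k (S (2*m+2))) atTop (𝓝 c₂) := by
      apply hconv k c₂ (fun m => 2*m+2) (fun m => by show 1 ≤ 2*m+2; omega)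
        (tendsto_atTop_mono (fun m => by simp only [id_eq]; omega) tendsto_id)
      intro m
      show (if (2*m+2) % 2 = 1 then c₁ else c₂) = c₂
      rw [if_neg (by omega)]
    have hφ₁ : Tendsto (fun m => S (2*m+1)) atTop atTop :=
      tendsto_atTop_mono (fun m => le_trans (by simp only [id_eq]; omega) (hSge (2*m+1))) tendsto_id
    have hφ₂ : Tendsto (fun m => S (2*m+2)) atTop atTop :=
      tendsto_atTop_mono (fun m => le_trans (by simp only [id_eq]; omega) (hSge (2*m+2))) tendsto_id
    rcases le_total c₁ c₂ with h | h
    · have hLe : L = c₁ := min_eq_left h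
      have hUe : U = c₂ := max_eq_right h
      exact ⟨aux_liminf _ L U hUb hLb _ hφ₁ (by rw [hLe]; exact hodd),
        aux_limsup _ L U hUb hLb _ hφ₂ (by rw [hUe]; exact heven)⟩
    · have hLe : L = c₂ := min_eq_right h
      have hUe : U = c₁ := max_eq_left h
      exact ⟨aux_liminf _ L U hUb hLb _ hφ₂ (by rw [hLe]; exact heven),
        aux_limsup _ L U hUb hLb _ hφ₁ (by rw [hUe]; exact hodd)⟩
  have hzero_eq : (fun n : ℕ => holderMeans (birk a) 0 n) = birk a := rfl
  refine ⟨?_, ?_, hmain⟩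
  · have := (hmain 0).1
    rw [hzero_eq] at this
    exact this
  · have := (hmain 0).2
    rw [hzero_eq] at this
    exact this
end
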